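/- Let d ≥ 1 be an integer, let D₁, D₂ > 0 and ε ∈ ℝ. Define c₁ = (π/d) D₁/(D₁+D₂), c₂ = (π/d) D₂/(D₁+D₂), a₁₂ = (d−1)(c₁+c₂), b₁ = (π/d)[(d−1)D₁ + dD₂]/(D₁+D₂), b₂ = (π/d)[(d−1)D₂ + dD₁]/(D₁+D₂), let a₁, a₂ ∈ ℝ be arbitrary, and set θ₁ = a₁ c₁ − a₁₂ c₂ and θ₂ = a₂ c₂ − a₁₂ c₁. Let u₁, u₂, V₁, V₂ : ℝ^d → ℝ be differentiable at a point x with u₁(x) > 0 and u₂(x) > 0. Then at x the following two vector identities in ℝ^d hold: (Row 1) D₁(1 + ε a₁ u₁ − ε c₁ u₂) ∇u₁ + ε D₁ b₁ u₁ ∇u₂ + u₁ ∇V₁ − ε c₁ u₁ u₂ (∇V₁ − ∇V₂) = D₁ u₁ (1 − ε c₁ u₂) ∇( log u₁ + V₁/D₁ + ε(a₁ u₁ + a₁₂ u₂) ) + ε D₁ c₂ u₁ u₂ ∇( log u₂ + V₂/D₂ + ε(a₂ u₂ + a₁₂ u₁) ) + ε² D₁ (θ₁ ∇u₁ − θ₂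 ∇u₂) u₁ u₂; (Row 2) D₂(1 + ε a₂ u₂ − ε c₂ u₁) ∇u₂ + ε D₂ b₂ u₂ ∇u₁ + u₂ ∇V₂ − ε c₂ u₁ u₂ (∇V₂ − ∇V₁) = D₂ u₂ (1 − ε c₂ u₁) ∇( log u₂ + V₂/D₂ + ε(a₂ u₂ + a₁₂ u₁) ) + ε D₂ c₁ u₁ u₂ ∇( log u₁ + V₁/D₁ + ε(a₁ u₁ + a₁₂ u₂) ) − ε² D₂ (θ₁ ∇u₁ − θ₂ ∇u₂) u₁ u₂. -/

import Mathlib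

open InnerProductSpace

open InnerProductSpace

lemma grad_combo {n : ℕ} (u w V : EuclideanSpace ℝ (Fin n) → ℝ)
    (x : EuclideanSpace ℝ (Fin n)) (D eps a b : ℝ)
    (hu : DifferentiableAt ℝ u x) (hw : DifferentiableAt ℝ w x)
    (hV : DifferentiableAt ℝ V x) (hune : u x ≠ 0) :
    gradient (fun y => Real.log (u y) + V y / D + eps * (a * u y + b * w y)) x
      = (u x)⁻¹ • gradient u x + D⁻¹ • gradient V x
        + (eps * a) • gradient u x + (eps * b) • gradient w x := by
  have h : HasFDerivAt (fun y => Real.log (u y) + V y / D + eps * (a * u y + b * w y))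
      ((u x)⁻¹ • fderiv ℝ u x + D⁻¹ • fderiv ℝ V x
        + ((eps * a) • fderiv ℝ u x + (eps * b) • fderiv ℝ w x)) x := by
    have h1 := (hu.hasFDerivAt.log hune).add (by simpa [div_eq_inv_mul] using hV.hasFDerivAt.const_mul D⁻¹ : HasFDerivAt (fun y => V y / D) (D⁻¹ • fderiv ℝ V x) x)
    have h2 : HasFDerivAt (fun y => eps * (a * u y + b * w y))
        ((eps * a) • fderiv ℝ u x + (eps * b) • fderiv ℝ w x) x := by
      have := (((hu.hasFDerivAt.const_mul a).add (hw.hasFDerivAt.const_mul b)).const_mul eps)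
      refine this.congr_fderiv ?_
      ext v
      simp [smul_smul, mul_add]
    exact h1.add h2
  rw [gradient, h.fderiv]
  simp only [map_add, map_smul, gradient]
  module



set_option maxHeartbeats 2000000 in
/-- Pointwise flux identity underlying the asymptotic gradient-flow structure of the
Bruna–Chapman cross-diffusion model with equal particle numbers: the components of the
flux `𝔇(u)∇u − 𝔉(u)u` coincide with those of `M_ε(u) ∇(δE_ε/δu) − ε²G`. -/
theorem asymptotic_gradient_flow_flux_identity (d : ℕ) (hd : 1 ≤ d)
    (D₁ D₂ eps : ℝ) (hD₁ : 0 < D₁) (hD₂ : 0 < D₂)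
    (a₁ a₂ c₁ c₂ a₁₂ b₁ b₂ θ₁ θ₂ : ℝ)
    (hc₁ : c₁ = Real.pi / d * (D₁ / (D₁ + D₂)))
    (hc₂ : c₂ = Real.pi / d * (D₂ / (D₁ + D₂)))
    (ha₁₂ : a₁₂ = ((d : ℝ) - 1) * (c₁ + c₂))
    (hb₁ : b₁ = Real.pi / d * ((((d : ℝ) - 1) * D₁ + d * D₂) / (D₁ + D₂)))
    (hb₂ : b₂ = Real.pi / d * ((((d : ℝ) - 1) * D₂ + d * D₁) / (D₁ + D₂)))
    (hθ₁ : θ₁ = a₁ * c₁ - a₁₂ * c₂) (hθ₂ : θ₂ = a₂ * c₂ - a₁₂ * c₁)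
    (u₁ u₂ V₁ V₂ : EuclideanSpace ℝ (Fin d) → ℝ) (x : EuclideanSpace ℝ (Fin d))
    (hu₁ : DifferentiableAt ℝ u₁ x) (hu₂ : DifferentiableAt ℝ u₂ x)
    (hV₁ : DifferentiableAt ℝ V₁ x) (hV₂ : DifferentiableAt ℝ V₂ x)
    (hu₁pos : 0 < u₁ x) (hu₂pos : 0 < u₂ x) :
    ((D₁ * (1 + eps * a₁ * u₁ x - eps * c₁ * u₂ x)) • gradient u₁ x
        + (eps * D₁ * b₁ * u₁ x) • gradient u₂ x
        + u₁ x • gradient V₁ x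
        - (eps * c₁ * u₁ x * u₂ x) • (gradient V₁ x - gradient V₂ x)
      = (D₁ * u₁ x * (1 - eps * c₁ * u₂ x)) •
          gradient (fun y => Real.log (u₁ y) + V₁ y / D₁
            + eps * (a₁ * u₁ y + a₁₂ * u₂ y)) x
        + (eps * D₁ * c₂ * u₁ x * u₂ x) •
          gradient (fun y => Real.log (u₂ y) + V₂ y / D₂
            + eps * (a₂ * u₂ y + a₁₂ * u₁ y)) x
        + (eps ^ 2 * D₁ * u₁ x * u₂ x) • (θ₁ • gradient u₁ x - θ₂ • gradient u₂ x))
    ∧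
    ((D₂ * (1 + eps * a₂ * u₂ x - eps * c₂ * u₁ x)) • gradient u₂ x
        + (eps * D₂ * b₂ * u₂ x) • gradient u₁ x
        + u₂ x • gradient V₂ x
        - (eps * c₂ * u₁ x * u₂ x) • (gradient V₂ x - gradient V₁ x)
      = (D₂ * u₂ x * (1 - eps * c₂ * u₁ x)) •
          gradient (fun y => Real.log (u₂ y) + V₂ y / D₂
            + eps * (a₂ * u₂ y + a₁₂ * u₁ y)) x
        + (eps * D₂ * c₁ * u₁ x * u₂ x) •
          gradient (fun y => Real.log (u₁ y) + V₁ y / D₁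
            + eps * (a₁ * u₁ y + a₁₂ * u₂ y)) x
        - (eps ^ 2 * D₂ * u₁ x * u₂ x) • (θ₁ • gradient u₁ x - θ₂ • gradient u₂ x)) := by
  have hne1 : u₁ x ≠ 0 := hu₁pos.ne'
  have hne2 : u₂ x ≠ 0 := hu₂pos.ne'
  have hdne : (d : ℝ) ≠ 0 := Nat.cast_ne_zero.mpr (by omega)
  have hsum : D₁ + D₂ ≠ 0 := by positivity
  have e2 : c₂ = D₂ * c₁ / D₁ := by rw [hc₁, hc₂]; field_simp
  have e3 : b₁ = a₁₂ + c₂ := by rw [hb₁, ha₁₂, hc₁, hc₂]; field_simp; ring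
  have e4 : b₂ = a₁₂ + c₁ := by rw [hb₂, ha₁₂, hc₁, hc₂]; field_simp; ring
  subst hθ₁ hθ₂
  rw [e3, e4, e2]
  have h1 := grad_combo u₁ u₂ V₁ x D₁ eps a₁ a₁₂ hu₁ hu₂ hV₁ hu₁pos.ne'
  have h2 := grad_combo u₂ u₁ V₂ x D₂ eps a₂ a₁₂ hu₂ hu₁ hV₂ hu₂pos.ne'
  rw [h1, h2]
  constructor <;>
  · match_scalars <;>
    · field_simp
      try ring
      try tauto
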